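/- Consider the closed-loop bittide dynamics θ'(t) = A·θ(t) + ω^u + q + r with correction c(t) = A·θ(t) + q + r, where A is an irreducible rate matrix with positive left null vector z (z > 0 entrywise, z^T A = 0, 1^T z = 1) and spectral projector W = 1·z^T. Then for any initial condition θ(0) and any q ∈ ℝ^n, lim_{t→∞} c(t) = (W − I)·ω^u + W·(q + r). -/

import Mathlib

open Matrix Filter

/-- A matrix is Metzler if all its off-diagonal entries are nonnegative. -/
def IsMetzler {n : ℕ} (Q : Matrix (Fin n) (Fin n) ℝ) : Prop :=
  ∀ i j, i ≠ j → 0 ≤ Q i j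

/-- A rate matrix is a Metzler matrix whose rows each sum to zero. -/
def IsRateMatrix {n : ℕ} (Q : Matrix (Fin n) (Fin n) ℝ) : Prop :=
  IsMetzler Q ∧ Q *ᵥ (fun _ => (1 : ℝ)) = 0

/-- A matrix is irreducible if the directed graph with an edge `i → j` whenever
`i ≠ j` and `Q i j ≠ 0` is strongly connected. -/
def IsIrreducibleMatrix {n : ℕ} (Q : Matrix (Fin n) (Fin n) ℝ) : Prop :=
  ∀ i j : Fin n, i ≠ j → Relation.TransGen (fun a b => a ≠ b ∧ Q a b ≠ 0) i j

namespace BittideAux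

open NormedSpace Nat

variable {n : ℕ}

noncomputable def entryLM (i j : Fin n) : Matrix (Fin n) (Fin n) ℝ →ₗ[ℝ] ℝ where
  toFun M := M i j
  map_add' _ _ := rfl
  map_smul' _ _ := rfl

noncomputable def mulVecLM (v : Fin n → ℝ) :
    Matrix (Fin n) (Fin n) ℝ →ₗ[ℝ] (Fin n → ℝ) where
  toFun M := M *ᵥ v
  map_add' M N := Matrix.add_mulVec M N v
  map_smul' c M := by simp [Matrix.smul_mulVec]

noncomputable def vecMulLM (v : Fin n → ℝ) :
    Matrix (Fin n) (Fin n) ℝ →ₗ[ℝ] (Fin n → ℝ) where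
  toFun M := v ᵥ* M
  map_add' M N := by
    ext j; simp [Matrix.vecMul, dotProduct, Matrix.add_apply, mul_add,
      Finset.sum_add_distrib]
  map_smul' c M := by
    ext j; simp [Matrix.vecMul, dotProduct, Finset.mul_sum, mul_left_comm]

theorem exp_hasSum (M : Matrix (Fin n) (Fin n) ℝ) :
    HasSum (fun k : ℕ => ((k)! : ℝ)⁻¹ • M ^ k) (exp M) := by
  letI : SeminormedRing (Matrix (Fin n) (Fin n) ℝ) := Matrix.linftyOpSemiNormedRing
  letI : NormedRing (Matrix (Fin n) (Fin n) ℝ) := Matrix.linftyOpNormedRing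
  letI : NormedAlgebra ℝ (Matrix (Fin n) (Fin n) ℝ) := Matrix.linftyOpNormedAlgebra
  exact exp_series_hasSum_exp' M

theorem exp_entry_hasSum (M : Matrix (Fin n) (Fin n) ℝ) (i j : Fin n) :
    HasSum (fun k : ℕ => ((k)! : ℝ)⁻¹ * (M ^ k) i j) (exp M i j) := by
  have h := (exp_hasSum M).mapL (LinearMap.toContinuousLinearMap (entryLM i j))
  exact h

theorem exp_mulVec_hasSum (M : Matrix (Fin n) (Fin n) ℝ) (v : Fin n → ℝ) :
    HasSum (fun k : ℕ => ((k)! : ℝ)⁻¹ • (M ^ k *ᵥ v)) (exp M *ᵥ v) := by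
  have h := (exp_hasSum M).mapL (LinearMap.toContinuousLinearMap (mulVecLM v))
  simpa [mulVecLM, LinearMap.coe_mk, AddHom.coe_mk] using h

theorem exp_vecMul_hasSum (M : Matrix (Fin n) (Fin n) ℝ) (v : Fin n → ℝ) :
    HasSum (fun k : ℕ => ((k)! : ℝ)⁻¹ • (v ᵥ* M ^ k)) (v ᵥ* exp M) := by
  have h := (exp_hasSum M).mapL (LinearMap.toContinuousLinearMap (vecMulLM v))
  simpa [vecMulLM, LinearMap.coe_mk, AddHom.coe_mk] using h

theorem exp_mulVec_fixed (M : Matrix (Fin n) (Fin n) ℝ) (v : Fin n → ℝ) (hv : M *ᵥ v = 0) :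
    exp M *ᵥ v = v := by
  have h := exp_mulVec_hasSum M v
  have h2 : HasSum (fun k : ℕ => ((k)! : ℝ)⁻¹ • (M ^ k *ᵥ v)) v := by
    have hz : ∀ k : ℕ, k ≠ 0 → ((k)! : ℝ)⁻¹ • (M ^ k *ᵥ v) = 0 := by
      intro k hk
      obtain ⟨l, rfl⟩ := Nat.exists_eq_succ_of_ne_zero hk
      rw [Nat.succ_eq_add_one, pow_succ, ← Matrix.mulVec_mulVec, hv, Matrix.mulVec_zero,
        smul_zero]
    have := hasSum_single (f := fun k : ℕ => ((k)! : ℝ)⁻¹ • (M ^ k *ᵥ v)) 0 hz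
    simpa using this
  exact h.unique h2

theorem exp_vecMul_fixed (M : Matrix (Fin n) (Fin n) ℝ) (z : Fin n → ℝ) (hz : z ᵥ* M = 0) :
    z ᵥ* exp M = z := by
  have h := exp_vecMul_hasSum M z
  have h2 : HasSum (fun k : ℕ => ((k)! : ℝ)⁻¹ • (z ᵥ* M ^ k)) z := by
    have hz' : ∀ k : ℕ, k ≠ 0 → ((k)! : ℝ)⁻¹ • (z ᵥ* M ^ k) = 0 := by
      intro k hk
      obtain ⟨l, rfl⟩ := Nat.exists_eq_succ_of_ne_zero hk
      rw [Nat.succ_eq_add_one, pow_succ' M l, ← Matrix.vecMul_vecMul, hz, Matrix.zero_vecMul,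
        smul_zero]
    have := hasSum_single (f := fun k : ℕ => ((k)! : ℝ)⁻¹ • (z ᵥ* M ^ k)) 0 hz'
    simpa using this
  exact h.unique h2

theorem exp_smul_one (s : ℝ) :
    exp (s • (1 : Matrix (Fin n) (Fin n) ℝ)) = Real.exp s • 1 := by
  have h1 : s • (1 : Matrix (Fin n) (Fin n) ℝ) = diagonal (fun _ => s) := by
    ext i j
    by_cases h : i = j <;> simp [h, Matrix.one_apply, Matrix.diagonal]
  rw [h1, Matrix.exp_diagonal]
  have h2 : exp (fun _ : Fin n => s) = fun _ : Fin n => Real.exp s := by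
    funext i
    rw [Pi.coe_exp (fun _ : Fin n => s) i, Real.exp_eq_exp_ℝ]
  rw [h2]
  ext i j
  by_cases h : i = j <;> simp [h, Matrix.diagonal, Matrix.one_apply]

/-- `exp (t • A)` in terms of the nonnegative matrix `A + c₀ • 1`. -/
theorem exp_smul_shift (A : Matrix (Fin n) (Fin n) ℝ) (c0 t : ℝ) :
    exp (t • A) = Real.exp (-(t * c0)) • exp (t • (A + c0 • 1)) := by
  have hcomm : Commute (t • (A + c0 • (1 : Matrix (Fin n) (Fin n) ℝ)))
      ((-(t * c0)) • (1 : Matrix (Fin n) (Fin n) ℝ)) :=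
    ((Commute.one_right _).smul_right _)
  have hsplit : t • A = t • (A + c0 • (1 : Matrix (Fin n) (Fin n) ℝ))
      + (-(t * c0)) • (1 : Matrix (Fin n) (Fin n) ℝ) := by
    rw [smul_add, smul_smul, add_assoc, neg_smul, add_neg_cancel, add_zero]
  rw [hsplit, Matrix.exp_add_of_commute _ _ hcomm, exp_smul_one, mul_smul_comm, mul_one]

theorem pow_entry_nonneg {M : Matrix (Fin n) (Fin n) ℝ} (hM : ∀ i j, 0 ≤ M i j) :
    ∀ (k : ℕ) (i j : Fin n), 0 ≤ (M ^ k) i j := by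
  intro k
  induction k with
  | zero => intro i j; by_cases h : i = j <;> simp [h, Matrix.one_apply]
  | succ m ih =>
    intro i j
    rw [pow_succ, Matrix.mul_apply]
    exact Finset.sum_nonneg fun a _ => mul_nonneg (ih i a) (hM a j)

theorem exp_entry_nonneg' {M : Matrix (Fin n) (Fin n) ℝ} (hM : ∀ i j, 0 ≤ M i j) (i j : Fin n) :
    0 ≤ exp M i j :=
  (exp_entry_hasSum M i j).nonneg fun k =>
    mul_nonneg (by positivity) (pow_entry_nonneg hM k i j)

theorem exp_smul_entry_nonneg {A : Matrix (Fin n) (Fin n) ℝ} (hM : IsMetzler A)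
    {t : ℝ} (ht : 0 ≤ t) (i j : Fin n) : 0 ≤ exp (t • A) i j := by
  set c0 : ℝ := 1 + ∑ i, |A i i| with hc0
  have hc0' : ∀ i, 0 < A i i + c0 := by
    intro i
    have h1 : |A i i| ≤ ∑ k, |A k k| :=
      Finset.single_le_sum (f := fun k => |A k k|) (fun k _ => abs_nonneg _) (Finset.mem_univ i)
    have h2 : -A i i ≤ |A i i| := neg_le_abs _
    simp only [hc0]
    linarith
  have hB : ∀ i j, 0 ≤ (A + c0 • (1 : Matrix (Fin n) (Fin n) ℝ)) i j := by
    intro i j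
    by_cases h : i = j
    · subst h
      have := hc0' i
      simp only [Matrix.add_apply, Matrix.smul_apply, Matrix.one_apply_eq, smul_eq_mul, mul_one]
      linarith
    · simpa [Matrix.add_apply, Matrix.one_apply_ne h] using hM i j h
  have htB : ∀ i j, 0 ≤ (t • (A + c0 • (1 : Matrix (Fin n) (Fin n) ℝ))) i j := by
    intro i j
    simpa using mul_nonneg ht (hB i j)
  rw [exp_smul_shift A c0 t]
  have := exp_entry_nonneg' htB i j
  simpa using mul_nonneg (Real.exp_nonneg _) this

theorem exp_entry_pos {A : Matrix (Fin n) (Fin n) ℝ} (hM : IsMetzler A)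
    (hirr : IsIrreducibleMatrix A) (i j : Fin n) : 0 < exp ((1 : ℝ) • A) i j := by
  set c0 : ℝ := 1 + ∑ i, |A i i| with hc0
  set B : Matrix (Fin n) (Fin n) ℝ := A + c0 • 1 with hBdef
  have hc0' : ∀ i, 0 < A i i + c0 := by
    intro i
    have h1 : |A i i| ≤ ∑ k, |A k k| :=
      Finset.single_le_sum (f := fun k => |A k k|) (fun k _ => abs_nonneg _) (Finset.mem_univ i)
    have h2 : -A i i ≤ |A i i| := neg_le_abs _
    simp only [hc0]
    linarith
  have hB : ∀ i j, 0 ≤ B i j := by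
    intro i j
    by_cases h : i = j
    · subst h
      have := hc0' i
      simp only [hBdef, Matrix.add_apply, Matrix.smul_apply, Matrix.one_apply_eq, smul_eq_mul,
        mul_one]
      linarith
    · simpa [hBdef, Matrix.add_apply, Matrix.one_apply_ne h] using hM i j h
  have hdiag : ∀ i, 0 < B i i := by
    intro i
    have := hc0' i
    simp only [hBdef, Matrix.add_apply, Matrix.smul_apply, Matrix.one_apply_eq, smul_eq_mul,
      mul_one]
    linarith
  have hBoff : ∀ a b : Fin n, a ≠ b → B a b = A a b := by
    intro a b hab
    simp [hBdef, Matrix.add_apply, Matrix.one_apply_ne hab]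
  -- positivity of entries of `exp B`
  have step : ∀ (k : ℕ) (a b : Fin n), 0 < (B ^ k) a b → 0 < (B ^ (k + 1)) a b := by
    intro k a b h
    rw [pow_succ, Matrix.mul_apply]
    have hle : (B ^ k) a b * B b b ≤ ∑ x, (B ^ k) a x * B x b :=
      Finset.single_le_sum (f := fun x => (B ^ k) a x * B x b)
        (fun x _ => mul_nonneg (pow_entry_nonneg hB k a x) (hB x b)) (Finset.mem_univ b)
    exact lt_of_lt_of_le (mul_pos h (hdiag b)) hle
  have mono : ∀ (k m : ℕ), k ≤ m → ∀ a b, 0 < (B ^ k) a b → 0 < (B ^ m) a b := by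
    intro k m hkm
    induction m, hkm using Nat.le_induction with
    | base => exact fun a b h => h
    | succ m _ ih => exact fun a b h => step m a b (ih a b h)
  have exists_pos : ∀ i j : Fin n, ∃ k, 0 < (B ^ k) i j := by
    intro i j
    by_cases hij : i = j
    · subst hij
      exact ⟨0, by simp⟩
    · have h := hirr i j hij
      clear hij
      induction h with
      | @single b hr =>
        have hpos : 0 < B i b := by
          rw [hBoff _ _ hr.1]
          exact lt_of_le_of_ne (hM _ _ hr.1) (Ne.symm hr.2)
        exact ⟨1, by simpa using hpos⟩
      | @tail b c hab hr ih =>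
        obtain ⟨k, hk⟩ := ih
        refine ⟨k + 1, ?_⟩
        rw [pow_succ, Matrix.mul_apply]
        have hbc : 0 < B b c := by
          rw [hBoff _ _ hr.1]
          exact lt_of_le_of_ne (hM _ _ hr.1) (Ne.symm hr.2)
        have hle : (B ^ k) i b * B b c ≤ ∑ x, (B ^ k) i x * B x c :=
          Finset.single_le_sum (f := fun x => (B ^ k) i x * B x c)
            (fun x _ => mul_nonneg (pow_entry_nonneg hB k i x) (hB x c)) (Finset.mem_univ b)
        exact lt_of_lt_of_le (mul_pos hk hbc) hle
  choose f hf using fun p : Fin n × Fin n => exists_pos p.1 p.2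
  set K := Finset.univ.sup f with hK
  have hKij : 0 < (B ^ K) i j := by
    have hle : f (i, j) ≤ K := Finset.le_sup (Finset.mem_univ (i, j))
    exact mono _ _ hle i j (hf (i, j))
  have hexpB : 0 < exp B i j := by
    have hterm : ((K)! : ℝ)⁻¹ * (B ^ K) i j ≤ exp B i j :=
      le_hasSum (exp_entry_hasSum B i j) K fun k _ =>
        mul_nonneg (by positivity) (pow_entry_nonneg hB k i j)
    exact lt_of_lt_of_le (mul_pos (by positivity) hKij) hterm
  have h1 : exp ((1 : ℝ) • A) = Real.exp (-(1 * c0)) • exp ((1 : ℝ) • B) := by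
    rw [exp_smul_shift A c0 1, hBdef]
  rw [h1, one_smul]
  have : (Real.exp (-(1 * c0)) • exp B) i j = Real.exp (-(1 * c0)) * exp B i j := rfl
  rw [this]
  exact mul_pos (Real.exp_pos _) hexpB

/-! ### Stochastic matrix estimates -/

theorem mulVec_le_sup' (hn : 0 < n) {P : Matrix (Fin n) (Fin n) ℝ}
    (hP : ∀ i j, 0 ≤ P i j) (hrow : ∀ i, ∑ j, P i j = 1) (v : Fin n → ℝ) (i : Fin n) :
    (P *ᵥ v) i ≤ Finset.univ.sup' (Finset.univ_nonempty_iff.mpr ⟨⟨0, hn⟩⟩) v := by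
  set mx := Finset.univ.sup' (Finset.univ_nonempty_iff.mpr ⟨⟨0, hn⟩⟩) v with hmx
  calc (P *ᵥ v) i = ∑ j, P i j * v j := rfl
    _ ≤ ∑ j, P i j * mx := Finset.sum_le_sum fun j _ =>
        mul_le_mul_of_nonneg_left (Finset.le_sup' v (Finset.mem_univ j)) (hP i j)
    _ = mx := by rw [← Finset.sum_mul, hrow, one_mul]

theorem inf'_le_mulVec (hn : 0 < n) {P : Matrix (Fin n) (Fin n) ℝ}
    (hP : ∀ i j, 0 ≤ P i j) (hrow : ∀ i, ∑ j, P i j = 1) (v : Fin n → ℝ) (i : Fin n) :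
    Finset.univ.inf' (Finset.univ_nonempty_iff.mpr ⟨⟨0, hn⟩⟩) v ≤ (P *ᵥ v) i := by
  set mn := Finset.univ.inf' (Finset.univ_nonempty_iff.mpr ⟨⟨0, hn⟩⟩) v with hmn
  calc mn = ∑ j, P i j * mn := by rw [← Finset.sum_mul, hrow, one_mul]
    _ ≤ ∑ j, P i j * v j := Finset.sum_le_sum fun j _ =>
        mul_le_mul_of_nonneg_left (Finset.inf'_le v (Finset.mem_univ j)) (hP i j)
    _ = (P *ᵥ v) i := rfl

theorem contraction (hn : 0 < n) {P : Matrix (Fin n) (Fin n) ℝ} {ε : ℝ}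
    (hρ : 0 < 1 - n * ε) (hP : ∀ i j, ε ≤ P i j) (hrow : ∀ i, ∑ j, P i j = 1)
    (v : Fin n → ℝ) :
    Finset.univ.sup' (Finset.univ_nonempty_iff.mpr ⟨⟨0, hn⟩⟩) (P *ᵥ v)
      - Finset.univ.inf' (Finset.univ_nonempty_iff.mpr ⟨⟨0, hn⟩⟩) (P *ᵥ v)
    ≤ (1 - n * ε) *
      (Finset.univ.sup' (Finset.univ_nonempty_iff.mpr ⟨⟨0, hn⟩⟩) v
        - Finset.univ.inf' (Finset.univ_nonempty_iff.mpr ⟨⟨0, hn⟩⟩) v) := by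
  have hne := (Finset.univ_nonempty_iff (α := Fin n)).mpr ⟨⟨0, hn⟩⟩
  set ρ := 1 - n * ε with hρdef
  set Q : Matrix (Fin n) (Fin n) ℝ := Matrix.of fun i j => (P i j - ε) / ρ with hQ
  have hQnn : ∀ i j, 0 ≤ Q i j := fun i j => div_nonneg (by linarith [hP i j]) hρ.le
  have hQrow : ∀ i, ∑ j, Q i j = 1 := by
    intro i
    rw [hQ]
    simp only [Matrix.of_apply]
    rw [← Finset.sum_div, Finset.sum_sub_distrib, hrow]
    simp [Finset.card_univ]
    field_simp
    exact hρdef.symm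
  have hdecomp : ∀ i, (P *ᵥ v) i = ρ * (Q *ᵥ v) i + ε * ∑ j, v j := by
    intro i
    simp only [Matrix.mulVec, dotProduct, hQ, Matrix.of_apply]
    rw [Finset.mul_sum, Finset.mul_sum]
    rw [← Finset.sum_add_distrib]
    congr 1; funext j
    field_simp
    ring
  obtain ⟨i0, -, hi0⟩ := Finset.exists_mem_eq_sup' hne (P *ᵥ v)
  obtain ⟨k0, -, hk0⟩ := Finset.exists_mem_eq_inf' hne (P *ᵥ v)
  rw [hi0, hk0, hdecomp i0, hdecomp k0]
  have h1 : (Q *ᵥ v) i0 ≤ Finset.univ.sup' hne v := mulVec_le_sup' hn hQnn hQrow v i0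
  have h2 : Finset.univ.inf' hne v ≤ (Q *ᵥ v) k0 := inf'_le_mulVec hn hQnn hQrow v k0
  have hsub := sub_le_sub (mul_le_mul_of_nonneg_left h1 hρ.le)
    (mul_le_mul_of_nonneg_left h2 hρ.le)
  calc ρ * (Q *ᵥ v) i0 + ε * ∑ j, v j - (ρ * (Q *ᵥ v) k0 + ε * ∑ j, v j)
      = ρ * (Q *ᵥ v) i0 - ρ * (Q *ᵥ v) k0 := by ring
    _ ≤ ρ * Finset.univ.sup' hne v - ρ * Finset.univ.inf' hne v := hsub
    _ = ρ * (Finset.univ.sup' hne v - Finset.univ.inf' hne v) := by ring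

theorem dot_le_sup' (hn : 0 < n) {z : Fin n → ℝ} (hz : ∀ j, 0 ≤ z j) (hzs : ∑ j, z j = 1)
    (v : Fin n → ℝ) :
    z ⬝ᵥ v ≤ Finset.univ.sup' (Finset.univ_nonempty_iff.mpr ⟨⟨0, hn⟩⟩) v := by
  calc z ⬝ᵥ v = ∑ j, z j * v j := rfl
    _ ≤ ∑ j, z j * Finset.univ.sup' (Finset.univ_nonempty_iff.mpr ⟨⟨0, hn⟩⟩) v :=
        Finset.sum_le_sum fun j _ =>
          mul_le_mul_of_nonneg_left (Finset.le_sup' v (Finset.mem_univ j)) (hz j)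
    _ = _ := by rw [← Finset.sum_mul, hzs, one_mul]

theorem inf'_le_dot (hn : 0 < n) {z : Fin n → ℝ} (hz : ∀ j, 0 ≤ z j) (hzs : ∑ j, z j = 1)
    (v : Fin n → ℝ) :
    Finset.univ.inf' (Finset.univ_nonempty_iff.mpr ⟨⟨0, hn⟩⟩) v ≤ z ⬝ᵥ v := by
  calc Finset.univ.inf' (Finset.univ_nonempty_iff.mpr ⟨⟨0, hn⟩⟩) v
      = ∑ j, z j * Finset.univ.inf' (Finset.univ_nonempty_iff.mpr ⟨⟨0, hn⟩⟩) v := by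
        rw [← Finset.sum_mul, hzs, one_mul]
    _ ≤ ∑ j, z j * v j := Finset.sum_le_sum fun j _ =>
        mul_le_mul_of_nonneg_left (Finset.inf'_le v (Finset.mem_univ j)) (hz j)
    _ = z ⬝ᵥ v := rfl

/-- Derivative of the matrix-exponential flow applied to a fixed vector. -/
theorem hasDerivAt_exp_mulVec (A : Matrix (Fin n) (Fin n) ℝ) (v0 : Fin n → ℝ) (t : ℝ) :
    HasDerivAt (fun t : ℝ => exp (t • A) *ᵥ v0) (A *ᵥ (exp (t • A) *ᵥ v0)) t := by
  letI : SeminormedRing (Matrix (Fin n) (Fin n) ℝ) := Matrix.linftyOpSemiNormedRing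
  letI : NormedRing (Matrix (Fin n) (Fin n) ℝ) := Matrix.linftyOpNormedRing
  letI : NormedAlgebra ℝ (Matrix (Fin n) (Fin n) ℝ) := Matrix.linftyOpNormedAlgebra
  have hd : HasDerivAt (fun u : ℝ => exp (u • A)) (A * exp (t • A)) t :=
    hasDerivAt_exp_smul_const' A t
  have h2 := (LinearMap.toContinuousLinearMap (mulVecLM v0)).hasFDerivAt.comp_hasDerivAt t hd
  rw [Matrix.mulVec_mulVec]
  exact h2

end BittideAux

open BittideAux NormedSpace

/-- Closed-loop bittide dynamics `θ'(t) = A θ(t) + ωᵘ + q + r` with correction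
`c(t) = A θ(t) + q + r`, where `A` is an irreducible rate matrix with positive
left null vector `z` and spectral projector `W = 1·zᵀ`.  Then for any initial
condition and any `q`, the correction converges:
`c(t) → (W - I) ωᵘ + W (q + r)` as `t → ∞`. -/
theorem correction_tendsto {n : ℕ} (A : Matrix (Fin n) (Fin n) ℝ)
    (hrate : IsRateMatrix A) (hirr : IsIrreducibleMatrix A)
    (z : Fin n → ℝ) (hz_pos : ∀ i, 0 < z i)
    (hz_left : z ᵥ* A = 0) (hz_sum : ∑ i, z i = 1)
    (W : Matrix (Fin n) (Fin n) ℝ) (hW : W = vecMulVec (fun _ => (1 : ℝ)) z)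
    (ωu q r : Fin n → ℝ) (θ : ℝ → Fin n → ℝ)
    (hθ : ∀ t : ℝ, 0 ≤ t → HasDerivAt θ (A *ᵥ θ t + ωu + q + r) t)
    (c : ℝ → Fin n → ℝ) (hc : ∀ t : ℝ, c t = A *ᵥ θ t + q + r) :
    Tendsto c atTop (nhds ((W - 1) *ᵥ ωu + W *ᵥ (q + r))) := by
  rcases Nat.eq_zero_or_pos n with hn0 | hn
  · subst hn0
    have hc' : c = fun _ => ((W - 1) *ᵥ ωu + W *ᵥ (q + r)) := by
      funext t i; exact i.elim0
    rw [hc']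
    exact tendsto_const_nhds
  -- setup
  obtain ⟨hMetzler, hones⟩ := hrate
  set b : Fin n → ℝ := ωu + q + r with hb
  set v0 : Fin n → ℝ := A *ᵥ θ 0 + b with hv0
  set y : ℝ → Fin n → ℝ := fun t => A *ᵥ θ t + b with hy
  -- `y` solves `y' = A y`
  have hyd : ∀ t : ℝ, 0 ≤ t → HasDerivAt y (A *ᵥ y t) t := by
    intro t ht
    have hyt : A *ᵥ θ t + ωu + q + r = y t := by
      rw [hy]; simp only [hb]; abel
    have hθ' : HasDerivAt θ (y t) t := hyt ▸ hθ t ht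
    have h2 := (LinearMap.toContinuousLinearMap (Matrix.mulVecLin A)).hasFDerivAt.comp_hasDerivAt t hθ'
    have h3 : HasDerivAt (fun u => A *ᵥ θ u) (A *ᵥ y t) t := by
      simpa [Function.comp_def, Matrix.mulVecLin_apply] using h2
    simpa [hy] using h3.add_const b
  -- the exponential solution
  set g : ℝ → Fin n → ℝ := fun t => exp (t • A) *ᵥ v0 with hg
  have hgd : ∀ t : ℝ, HasDerivAt g (A *ᵥ g t) t := fun t => hasDerivAt_exp_mulVec A v0 t
  have hg0 : g 0 = v0 := by simp [hg]
  have hy0 : y 0 = v0 := rfl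
  have key : ∀ t : ℝ, 0 ≤ t → y t = g t := by
    intro T hT
    have hLip : ∀ s : ℝ, LipschitzWith ‖(Matrix.mulVecLin A).toContinuousLinearMap‖₊
        (fun x : Fin n → ℝ => A *ᵥ x) := by
      intro s
      have := (Matrix.mulVecLin A).toContinuousLinearMap.lipschitz
      simpa [Matrix.coe_mulVecLin] using this
    have := ODE_solution_unique (v := fun _ x => A *ᵥ x) (f := y) (g := g) (a := 0) (b := T)
      (hLip)
      (fun s hs => (hyd s hs.1).continuousAt.continuousWithinAt)
      (fun s hs => (hyd s hs.1).hasDerivWithinAt)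
      (fun s _ => (hgd s).continuousAt.continuousWithinAt)
      (fun s _ => (hgd s).hasDerivWithinAt)
      (hy0.trans hg0.symm)
    exact this ⟨hT, le_refl T⟩
  -- stochastic structure of exp (s • A)
  set onev : Fin n → ℝ := fun _ => (1 : ℝ) with honev
  have hexp_row : ∀ s : ℝ, ∀ i, ∑ j, exp (s • A) i j = 1 := by
    intro s i
    have h0 : (s • A) *ᵥ onev = 0 := by
      rw [honev]
      have : A *ᵥ (fun _ => (1:ℝ)) = 0 := hones
      rw [Matrix.smul_mulVec, this, smul_zero]
    have := exp_mulVec_fixed (s • A) onev h0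
    have h1 := congrFun this i
    simpa [Matrix.mulVec, dotProduct, honev] using h1
  have hexp_nn : ∀ s : ℝ, 0 ≤ s → ∀ i j, 0 ≤ exp (s • A) i j := by
    intro s hs i j
    exact exp_smul_entry_nonneg hMetzler hs i j
  set P : Matrix (Fin n) (Fin n) ℝ := exp ((1:ℝ) • A) with hP
  have hPpos : ∀ i j, 0 < P i j := fun i j => exp_entry_pos hMetzler hirr i j
  have hProw : ∀ i, ∑ j, P i j = 1 := fun i => hexp_row 1 i
  -- minimum entry
  have hneP : (Finset.univ : Finset (Fin n × Fin n)).Nonempty :=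
    Finset.univ_nonempty_iff.mpr ⟨(⟨0, hn⟩, ⟨0, hn⟩)⟩
  set ε : ℝ := Finset.univ.inf' hneP (fun p : Fin n × Fin n => P p.1 p.2) with hεdef
  have hεpos : 0 < ε := by
    rw [hεdef]
    obtain ⟨p, -, hp⟩ := Finset.exists_mem_eq_inf' hneP (fun p : Fin n × Fin n => P p.1 p.2)
    rw [hp]
    exact hPpos p.1 p.2
  have hεle : ∀ i j, ε ≤ P i j := fun i j =>
    Finset.inf'_le (fun p : Fin n × Fin n => P p.1 p.2) (Finset.mem_univ (i, j))
  have hnε : (n : ℝ) * ε ≤ 1 := by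
    have h1 : ∑ j, ε ≤ ∑ j, P ⟨0, hn⟩ j := Finset.sum_le_sum fun j _ => hεle _ j
    rw [hProw ⟨0, hn⟩] at h1
    simpa [Finset.card_univ, mul_comm] using h1
  set ε' : ℝ := ε / 2 with hε'def
  set ρ : ℝ := 1 - n * ε' with hρdef
  have hρpos : 0 < ρ := by
    rw [hρdef, hε'def]
    nlinarith
  have hρlt1 : ρ < 1 := by
    rw [hρdef, hε'def]
    have : (0:ℝ) < n := by exact_mod_cast hn
    nlinarith
  have hε'le : ∀ i j, ε' ≤ P i j := by
    intro i j
    have := hεle i j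
    rw [hε'def]
    linarith
  -- notation for sup'/inf'
  have hne := (Finset.univ_nonempty_iff (α := Fin n)).mpr ⟨⟨0, hn⟩⟩
  set mxv := fun v : Fin n → ℝ => Finset.univ.sup' (Finset.univ_nonempty_iff.mpr ⟨⟨0, hn⟩⟩) v
    with hmxv
  set mnv := fun v : Fin n → ℝ => Finset.univ.inf' (Finset.univ_nonempty_iff.mpr ⟨⟨0, hn⟩⟩) v
    with hmnv
  set D : ℝ := mxv v0 - mnv v0 with hD
  -- iterated contraction
  have hiter : ∀ m : ℕ, mxv (P ^ m *ᵥ v0) - mnv (P ^ m *ᵥ v0) ≤ ρ ^ m * D := by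
    intro m
    induction m with
    | zero => simp [hD]
    | succ m ih =>
      have hsplit : P ^ (m + 1) *ᵥ v0 = P *ᵥ (P ^ m *ᵥ v0) := by
        rw [Matrix.mulVec_mulVec, ← pow_succ' P m]
      rw [hsplit]
      have hcon := contraction hn (ε := ε') (by rw [← hρdef]; exact hρpos) hε'le hProw
        (P ^ m *ᵥ v0)
      rw [← hρdef] at hcon
      calc mxv (P *ᵥ (P ^ m *ᵥ v0)) - mnv (P *ᵥ (P ^ m *ᵥ v0))
          ≤ ρ * (mxv (P ^ m *ᵥ v0) - mnv (P ^ m *ᵥ v0)) := hcon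
        _ ≤ ρ * (ρ ^ m * D) := mul_le_mul_of_nonneg_left ih hρpos.le
        _ = ρ ^ (m + 1) * D := by ring
  -- invariant average
  set μ : ℝ := z ⬝ᵥ v0 with hμ
  have hzP : z ᵥ* P = z := exp_vecMul_fixed _ z (by rw [one_smul]; exact hz_left)
  have hzPm : ∀ m : ℕ, z ᵥ* P ^ m = z := by
    intro m
    induction m with
    | zero => simp
    | succ m ih => rw [pow_succ, ← Matrix.vecMul_vecMul, ih, hzP]
  have hμm : ∀ m : ℕ, z ⬝ᵥ (P ^ m *ᵥ v0) = μ := by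
    intro m
    rw [dotProduct_mulVec, hzPm m, hμ]
  -- decomposition of exp (t • A) for t ≥ 0
  have hdecomp : ∀ t : ℝ, 0 ≤ t →
      g t = exp ((t - ⌊t⌋₊) • A) *ᵥ (P ^ ⌊t⌋₊ *ᵥ v0) := by
    intro t ht
    have hsum : t • A = (t - ⌊t⌋₊) • A + ((⌊t⌋₊ : ℝ)) • A := by
      rw [← add_smul]; ring_nf
    have hcomm : Commute ((t - ⌊t⌋₊) • A) (((⌊t⌋₊ : ℝ)) • A) :=
      ((Commute.refl A).smul_left _).smul_right _
    have hPm : exp (((⌊t⌋₊ : ℝ)) • A) = P ^ ⌊t⌋₊ := by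
      have h1 : ((⌊t⌋₊ : ℝ)) • A = (⌊t⌋₊ : ℕ) • ((1:ℝ) • A) := by
        rw [one_smul, Nat.cast_smul_eq_nsmul]
      rw [h1, Matrix.exp_nsmul, hP]
    rw [hg]
    simp only
    rw [hsum, Matrix.exp_add_of_commute _ _ hcomm, hPm, ← Matrix.mulVec_mulVec]
  -- the coordinatewise bound
  have hbound : ∀ t : ℝ, 0 ≤ t → ∀ i, |y t i - μ| ≤ ρ ^ ⌊t⌋₊ * D := by
    intro t ht i
    set s : ℝ := t - ⌊t⌋₊ with hs
    have hs0 : 0 ≤ s := by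
      rw [hs]
      have := Nat.floor_le ht
      linarith
    set w : Fin n → ℝ := P ^ ⌊t⌋₊ *ᵥ v0 with hw
    have hyi : y t i = (exp (s • A) *ᵥ w) i := by
      rw [key t ht, hdecomp t ht]
    have hEnn : ∀ i j, 0 ≤ exp (s • A) i j := hexp_nn s hs0
    have hErow : ∀ i, ∑ j, exp (s • A) i j = 1 := hexp_row s
    have hup : (exp (s • A) *ᵥ w) i ≤ mxv w := mulVec_le_sup' hn hEnn hErow w i
    have hlo : mnv w ≤ (exp (s • A) *ᵥ w) i := inf'_le_mulVec hn hEnn hErow w i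
    have hμw : μ = z ⬝ᵥ w := (hμm ⌊t⌋₊).symm
    have hμup : z ⬝ᵥ w ≤ mxv w := dot_le_sup' hn (fun j => (hz_pos j).le) hz_sum w
    have hμlo : mnv w ≤ z ⬝ᵥ w := inf'_le_dot hn (fun j => (hz_pos j).le) hz_sum w
    have hosc := hiter ⌊t⌋₊
    rw [abs_le]
    constructor
    · rw [hyi, hμw]; linarith
    · rw [hyi, hμw]; linarith
  -- conclude convergence coordinatewise
  have hDnn : 0 ≤ D := by
    rw [hD, hmxv, hmnv]
    have h1 : Finset.univ.inf' (Finset.univ_nonempty_iff.mpr ⟨⟨0, hn⟩⟩) v0 ≤ v0 ⟨0, hn⟩ :=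
      Finset.inf'_le v0 (Finset.mem_univ _)
    have h2 : v0 ⟨0, hn⟩ ≤ Finset.univ.sup' (Finset.univ_nonempty_iff.mpr ⟨⟨0, hn⟩⟩) v0 :=
      Finset.le_sup' v0 (Finset.mem_univ _)
    simp only []
    linarith
  have htend0 : Tendsto (fun t : ℝ => ρ ^ ⌊t⌋₊ * D) atTop (nhds 0) := by
    have h1 : Tendsto (fun m : ℕ => ρ ^ m) atTop (nhds 0) :=
      tendsto_pow_atTop_nhds_zero_of_lt_one hρpos.le hρlt1
    have h2 := (h1.comp (tendsto_nat_floor_atTop (α := ℝ))).mul_const D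
    simpa using h2
  have hyc : ∀ i, Tendsto (fun t => y t i) atTop (nhds μ) := by
    intro i
    have hsq : Tendsto (fun t => y t i - μ) atTop (nhds 0) := by
      apply squeeze_zero_norm'
      · filter_upwards [eventually_ge_atTop (0:ℝ)] with t ht
        simpa [Real.norm_eq_abs] using hbound t ht i
      · exact htend0
    have := hsq.add_const μ
    simpa using this
  -- identify the limit
  have hμb : μ = z ⬝ᵥ b := by
    rw [hμ, hv0, dotProduct_add, dotProduct_mulVec, hz_left]
    simp
  have hLim : ((W - 1) *ᵥ ωu + W *ᵥ (q + r)) = fun i => μ - ωu i := by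
    funext i
    rw [hμb, hW]
    simp only [Pi.add_apply, Matrix.sub_mulVec, Pi.sub_apply]
    have hWv : ∀ x : Fin n → ℝ, (vecMulVec (fun _ => (1:ℝ)) z *ᵥ x) i = z ⬝ᵥ x := by
      intro x
      simp [Matrix.mulVec, Matrix.vecMulVec_apply, dotProduct]
    rw [hWv ωu, hWv (q + r)]
    have h1 : ((1 : Matrix (Fin n) (Fin n) ℝ) *ᵥ ωu) i = ωu i := by
      rw [Matrix.one_mulVec]
    rw [h1, hb]
    have : z ⬝ᵥ (ωu + q + r) = z ⬝ᵥ ωu + z ⬝ᵥ (q + r) := by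
      rw [add_assoc, dotProduct_add]
    rw [this]
    ring
  rw [hLim]
  rw [tendsto_pi_nhds]
  intro i
  have hci : ∀ t, c t i = y t i - ωu i := by
    intro t
    rw [hc t, hy]
    simp only [Pi.add_apply, Pi.sub_apply, hb]
    ring
  have : (fun t => c t i) = fun t => y t i - ωu i := funext hci
  rw [this]
  exact (hyc i).sub_const (ωu i)
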